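/- For a > 0 and n >= 1, R_{n-1}(ai) = i^{n-1} * (a/sqrt(a^2+1)) * (a + sqrt(a^2+1))^{n-1}, where R_{n-1}(z) = (1/sqrt(a^2+1))( sqrt(a^2+1) z U_{n-2}(z) + a T_{n-1}(z) ) is evaluated at the purely imaginary point ai. -/

import Mathlib

open Polynomial

lemma stmt9_aux (a : ℝ) (k : ℕ) :
    (Real.sqrt (a ^ 2 + 1) : ℂ) * ((a : ℂ) * Complex.I) *
        (Polynomial.Chebyshev.U ℂ ((k : ℤ) - 1)).eval ((a : ℂ) * Complex.I) +
      (a : ℂ) * (Polynomial.Chebyshev.T ℂ (k : ℤ)).eval ((a : ℂ) * Complex.I) =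
    (a : ℂ) * (Complex.I * ((a : ℂ) + (Real.sqrt (a ^ 2 + 1) : ℂ))) ^ k := by
  set s : ℂ := (Real.sqrt (a ^ 2 + 1) : ℂ) with hs
  have hs2 : s ^ 2 = (a : ℂ) ^ 2 + 1 := by
    rw [hs]
    norm_cast
    rw [Real.sq_sqrt (by positivity)]
  induction k using Nat.twoStepInduction with
  | zero =>
      simp [Polynomial.Chebyshev.U_neg_one, Polynomial.Chebyshev.T_zero]
  | one =>
      simp only [Nat.cast_one]
      norm_num [Polynomial.Chebyshev.U_zero, Polynomial.Chebyshev.T_one]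
      ring
  | more k ih1 ih2 =>
      have hT : Polynomial.Chebyshev.T ℂ ((k : ℤ) + 2) =
          2 * X * Polynomial.Chebyshev.T ℂ ((k : ℤ) + 1) - Polynomial.Chebyshev.T ℂ k :=
        Polynomial.Chebyshev.T_add_two ℂ k
      have hU : Polynomial.Chebyshev.U ℂ ((k : ℤ) + 1) =
          2 * X * Polynomial.Chebyshev.U ℂ ((k : ℤ)) - Polynomial.Chebyshev.U ℂ ((k:ℤ) - 1) := by
        have h := Polynomial.Chebyshev.U_add_two ℂ ((k : ℤ) - 1)
        rw [show (k:ℤ) - 1 + 2 = (k:ℤ) + 1 by ring, show (k:ℤ) - 1 + 1 = (k:ℤ) by ring] at h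
        exact h
      have hk2 : ((k + 2 : ℕ) : ℤ) = (k : ℤ) + 2 := by push_cast; ring
      have hk2' : ((k + 2 : ℕ) : ℤ) - 1 = (k : ℤ) + 1 := by push_cast; ring
      have hk1 : ((k + 1 : ℕ) : ℤ) = (k : ℤ) + 1 := by push_cast; ring
      have hk1' : ((k + 1 : ℕ) : ℤ) - 1 = (k : ℤ) := by push_cast; ring
      rw [hk2', hk2, hT, hU]
      rw [hk1', hk1] at ih2
      simp only [eval_sub, eval_mul, eval_ofNat, eval_X] at *
      have hw : (Complex.I * ((a : ℂ) + s)) ^ (k + 2)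
          = 2 * ((a:ℂ) * Complex.I) * (Complex.I * ((a : ℂ) + s)) ^ (k + 1)
            - (Complex.I * ((a : ℂ) + s)) ^ k := by
        have : (Complex.I * ((a : ℂ) + s)) ^ 2
            = 2 * ((a:ℂ) * Complex.I) * (Complex.I * ((a : ℂ) + s)) - 1 := by
          have hI : Complex.I ^ 2 = -1 := Complex.I_sq
          linear_combination (((a:ℂ)+s)^2 - 2*(a:ℂ)*((a:ℂ)+s)) * hI - hs2
        calc (Complex.I * ((a : ℂ) + s)) ^ (k + 2)
            = (Complex.I * ((a : ℂ) + s)) ^ k * (Complex.I * ((a : ℂ) + s)) ^ 2 := by ring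
          _ = (Complex.I * ((a : ℂ) + s)) ^ k *
              (2 * ((a:ℂ) * Complex.I) * (Complex.I * ((a : ℂ) + s)) - 1) := by rw [this]
          _ = _ := by ring
      rw [hw]
      linear_combination 2 * ((a:ℂ) * Complex.I) * ih2 - ih1

/-- Value of `R_{n-1}` at the purely imaginary point `ai`. -/
theorem stmt9 (a : ℝ) (ha : 0 < a) (n : ℕ) (hn : 1 ≤ n) :
    (1 / (Real.sqrt (a ^ 2 + 1) : ℂ)) *
        ((Real.sqrt (a ^ 2 + 1) : ℂ) * ((a : ℂ) * Complex.I) *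
            (Polynomial.Chebyshev.U ℂ ((n : ℤ) - 2)).eval ((a : ℂ) * Complex.I) +
          (a : ℂ) * (Polynomial.Chebyshev.T ℂ ((n : ℤ) - 1)).eval ((a : ℂ) * Complex.I)) =
      Complex.I ^ (n - 1) * ((a : ℂ) / (Real.sqrt (a ^ 2 + 1) : ℂ)) *
        ((a : ℂ) + (Real.sqrt (a ^ 2 + 1) : ℂ)) ^ (n - 1) := by
  have key := stmt9_aux a (n - 1)
  have hc1 : (((n - 1 : ℕ) : ℤ)) - 1 = (n : ℤ) - 2 := by omega
  have hc2 : (((n - 1 : ℕ) : ℤ)) = (n : ℤ) - 1 := by omega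
  rw [hc1, hc2] at key
  rw [key, mul_pow]
  field_simp
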